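/- Let h : X → Y be a flip conjugacy between Smale spaces (X,φ) and (Y,ψ). Then the map η : X×X → Y×Y defined by η(x,z) = (h(x),h(z)) restricts to an isomorphism of topological groupoids from G_φ^a onto G_ψ^a: it is a bijection from G_φ^a onto G_ψ^a preserving the groupoid (equivalence relation) structure, and it is a homeomorphism with respect to the inductive limit topologies on G_φ^a and G_ψ^a. -/

import Mathlib

open Filter Set Topology

noncomputable section

/-- Integer iterate of a homeomorphism. -/
def hIter {X : Type*} [TopologicalSpace X] (φ : X ≃ₜ X) (n : ℤ) (x : X) : X :=
  ((φ.toEquiv : Equiv.Perm X) ^ n) x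

/-- The cocycle sums `f^n` of a function `f : X → ℤ` along the iterates of `φ`:
`f^n(x) = Σ_{i=0}^{n-1} f(φ^i(x))` for `n > 0`, `f^0 = 0`, and
`f^n(x) = −Σ_{i=n}^{-1} f(φ^i(x))` for `n < 0`. -/
def cSum {X : Type*} [TopologicalSpace X] (φ : X ≃ₜ X) (f : X → ℤ) (n : ℤ) (x : X) : ℤ :=
  if 0 ≤ n then ∑ i ∈ Finset.range n.toNat, f (hIter φ i x)
  else -∑ i ∈ Finset.range (-n).toNat, f (hIter φ (n + i) x)

/-- Stable asymptotic pairs (limit definition). -/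
def asympS {X : Type*} [MetricSpace X] (φ : X ≃ₜ X) : Set (X × X) :=
  {p | Tendsto (fun n : ℕ => dist (hIter φ n p.1) (hIter φ n p.2)) atTop (nhds 0)}

/-- Unstable asymptotic pairs (limit definition). -/
def asympU {X : Type*} [MetricSpace X] (φ : X ≃ₜ X) : Set (X × X) :=
  {p | Tendsto (fun n : ℕ => dist (hIter φ (-(n : ℤ)) p.1) (hIter φ (-(n : ℤ)) p.2))
    atTop (nhds 0)}

/-- Asymptotic pairs (limit definition). -/
def asympA {X : Type*} [MetricSpace X] (φ : X ≃ₜ X) : Set (X × X) := asympS φ ∩ asympU φ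

/-- The `ω`-limit set of `x`. -/
def omegaSet {X : Type*} [MetricSpace X] (φ : X ≃ₜ X) (x : X) : Set X :=
  {z | ∃ n : ℕ → ℕ, StrictMono n ∧ Tendsto (fun i => hIter φ (n i) x) atTop (nhds z)}

/-- The `α`-limit set of `x`. -/
def alphaSet {X : Type*} [MetricSpace X] (φ : X ≃ₜ X) (x : X) : Set X :=
  {z | ∃ n : ℕ → ℤ, StrictAnti n ∧ Tendsto (fun i => hIter φ (n i) x) atTop (nhds z)}

/-- A Smale space structure on a compact metric space `X`. -/
structure SmaleSpace (X : Type*) [MetricSpace X] [CompactSpace X] where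
  phi : X ≃ₜ X
  eps : ℝ
  lam : ℝ
  br : X → X → X
  eps_pos : 0 < eps
  lam_pos : 0 < lam
  lam_lt_one : lam < 1
  br_cont : ContinuousOn (fun p : X × X => br p.1 p.2) {p : X × X | dist p.1 p.2 < eps}
  br_self : ∀ x : X, br x x = x
  br_assoc_left : ∀ x y z : X, dist x y < eps → dist (br x y) z < eps → dist x z < eps →
    br (br x y) z = br x z
  br_assoc_right : ∀ x y z : X, dist y z < eps → dist x (br y z) < eps → dist x z < eps →
    br x (br y z) = br x z
  phi_br : ∀ x y : X, dist x y < eps → dist (phi x) (phi y) < eps →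
    phi (br x y) = br (phi x) (phi y)
  contract_s : ∀ x y z : X, br y x = y → dist x y < eps → br z x = z → dist x z < eps →
    dist (phi y) (phi z) ≤ lam * dist y z
  contract_u : ∀ x y z : X, br x y = y → dist x y < eps → br x z = z → dist x z < eps →
    dist (phi.symm y) (phi.symm z) ≤ lam * dist y z

namespace SmaleSpace

variable {X Y : Type*} [MetricSpace X] [CompactSpace X] [MetricSpace Y] [CompactSpace Y]

/-- Local stable set `X^s(x,ε)`. -/
def Xs (S : SmaleSpace X) (x : X) (ε : ℝ) : Set X := {y | S.br y x = y ∧ dist x y < ε}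

/-- Local unstable set `X^u(x,ε)`. -/
def Xu (S : SmaleSpace X) (x : X) (ε : ℝ) : Set X := {y | S.br x y = y ∧ dist x y < ε}

def Gs0 (S : SmaleSpace X) : Set (X × X) := {p | p.2 ∈ S.Xs p.1 S.eps}

def Gu0 (S : SmaleSpace X) : Set (X × X) := {p | p.2 ∈ S.Xu p.1 S.eps}

/-- `G_φ^{s,n} = (φ×φ)^{-n}(G_φ^{s,0})`. -/
def GsN (S : SmaleSpace X) (n : ℤ) : Set (X × X) :=
  {p | (hIter S.phi n p.1, hIter S.phi n p.2) ∈ S.Gs0}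

/-- `G_φ^{u,n} = (φ×φ)^{n}(G_φ^{u,0})`. -/
def GuN (S : SmaleSpace X) (n : ℤ) : Set (X × X) :=
  {p | (hIter S.phi (-n) p.1, hIter S.phi (-n) p.2) ∈ S.Gu0}

def GaN (S : SmaleSpace X) (n : ℤ) : Set (X × X) := S.GsN n ∩ S.GuN n

/-- The asymptotic equivalence relation `G_φ^a = ⋃_{n ≥ 0} G_φ^{a,n}`. -/
def Ga (S : SmaleSpace X) : Set (X × X) := ⋃ n : ℕ, S.GaN n

lemma gaN_subset_ga (S : SmaleSpace X) (n : ℕ) : S.GaN n ⊆ S.Ga :=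
  Set.subset_iUnion (fun k : ℕ => S.GaN k) n

/-- The inductive limit topology on `G_φ^a`: a set is open iff its intersection with each
`G_φ^{a,n}` is open in the subspace topology from `X × X`. -/
def gaTopology (S : SmaleSpace X) : TopologicalSpace ↥S.Ga :=
  ⨆ n : ℕ, TopologicalSpace.coinduced (Set.inclusion (S.gaN_subset_ga n)) inferInstance

/-- Irreducibility of a Smale space. -/
def Irreducible (S : SmaleSpace X) : Prop :=
  ∀ U V : Set X, IsOpen U → U.Nonempty → IsOpen V → V.Nonempty →
    ∃ K : ℕ, ((hIter S.phi K '' U) ∩ V).Nonempty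

def IsPeriodicPoint (S : SmaleSpace X) (x : X) : Prop :=
  ∃ p : ℕ, 0 < p ∧ hIter S.phi p x = x

/-- `h` is a flip conjugacy between `(X,φ)` and `(Y,ψ)`. -/
def IsFlipConjugacy (S : SmaleSpace X) (T : SmaleSpace Y) (h : X ≃ₜ Y) : Prop :=
  (∀ x, h (S.phi x) = T.phi (h x)) ∨ (∀ x, h (S.phi x) = T.phi.symm (h x))

def FlipConjugate (S : SmaleSpace X) (T : SmaleSpace Y) : Prop :=
  ∃ h : X ≃ₜ Y, IsFlipConjugacy S T h

/-- An isomorphism of the principal étale groupoids `G_φ^a` and `G_ψ^a`: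
a bijection which is a homeomorphism for the inductive limit topologies and preserves
the (equivalence relation) groupoid structure. -/
structure GaIso (S : SmaleSpace X) (T : SmaleSpace Y) where
  toEquiv : ↥S.Ga ≃ ↥T.Ga
  cont : @Continuous _ _ S.gaTopology T.gaTopology toEquiv
  cont_symm : @Continuous _ _ T.gaTopology S.gaTopology toEquiv.symm
  map_mul : ∀ p q r : ↥S.Ga, (p : X × X).2 = (q : X × X).1 →
    (r : X × X) = ((p : X × X).1, (q : X × X).2) →
    (toEquiv p : Y × Y).2 = (toEquiv q : Y × Y).1 ∧
      (toEquiv r : Y × Y) = ((toEquiv p : Y × Y).1, (toEquiv q : Y × Y).2)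

end SmaleSpace



section HIterLemmas
variable {X Y : Type*} [TopologicalSpace X] [TopologicalSpace Y] (φ : X ≃ₜ X)

lemma hIter_zero (x : X) : hIter φ 0 x = x := rfl

lemma hIter_add (m n : ℤ) (x : X) : hIter φ (m + n) x = hIter φ m (hIter φ n x) := by
  simp [hIter, zpow_add, Equiv.Perm.mul_apply]

lemma hIter_one (x : X) : hIter φ 1 x = φ x := by simp [hIter]

lemma hIter_neg_one (x : X) : hIter φ (-1) x = φ.symm x := by
  simp [hIter]

lemma hIter_symm (n : ℤ) (x : X) : hIter φ.symm n x = hIter φ (-n) x := by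
  have e : φ.symm.toEquiv = (φ.toEquiv : Equiv.Perm X)⁻¹ := rfl
  simp [hIter, e, inv_zpow, zpow_neg]

lemma conj_hIter {ψ : Y ≃ₜ Y} {h : X ≃ₜ Y} (hc : ∀ x, h (φ x) = ψ (h x)) :
    ∀ (n : ℤ) (x : X), h (hIter φ n x) = hIter ψ n (h x) := by
  intro n
  induction n using Int.induction_on with
  | zero => intro x; rfl
  | succ k ih =>
    intro x
    have e1 : ((k:ℤ) + 1) = 1 + (k:ℤ) := by ring
    rw [e1, hIter_add, hIter_add, hIter_one, hIter_one, hc, ih]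
  | pred k ih =>
    intro x
    have e1 : (-(k:ℤ) - 1) = (-1) + (-(k:ℤ)) := by ring
    have hs : ∀ y : X, h (φ.symm y) = ψ.symm (h y) := by
      intro y
      have := hc (φ.symm y)
      simp at this
      rw [this]; simp
    rw [e1, hIter_add, hIter_add, hIter_neg_one, hIter_neg_one, hs, ih]

lemma hIter_natSucc (k : ℕ) (x : X) : hIter φ ((k:ℤ) + 1) x = φ (hIter φ k x) := by
  rw [add_comm, hIter_add, hIter_one]

lemma hIter_symm_natSucc (k : ℕ) (x : X) : φ.symm (hIter φ ((k:ℤ)+1) x) = hIter φ k x := by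
  rw [hIter_natSucc]; simp

end HIterLemmas

namespace SmaleSpace

variable {X Y : Type*} [MetricSpace X] [CompactSpace X] [MetricSpace Y] [CompactSpace Y]

lemma lam_lt_eps_of_lt (S : SmaleSpace X) {a : ℝ} (h : a < S.eps) (ha : 0 ≤ a) :
    S.lam * a < S.eps :=
  lt_of_le_of_lt (by nlinarith [S.lam_pos, S.lam_lt_one]) h

/-- Forward contraction along stable pairs. -/
lemma forward (S : SmaleSpace X) {x z : X} (hbr : S.br z x = z) (hd : dist x z < S.eps) :
    ∀ k : ℕ, S.br (hIter S.phi k z) (hIter S.phi k x) = hIter S.phi k z ∧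
      dist (hIter S.phi k x) (hIter S.phi k z) ≤ S.lam ^ k * dist x z := by
  intro k
  induction k with
  | zero => exact ⟨by simpa [hIter_zero] using hbr, by simp [hIter_zero]⟩
  | succ k ih =>
    obtain ⟨brk, dk⟩ := ih
    set xk := hIter S.phi k x
    set zk := hIter S.phi k z
    have hdk : dist xk zk < S.eps := by
      calc dist xk zk ≤ S.lam ^ k * dist x z := dk
        _ ≤ 1 * dist x z := by
            apply mul_le_mul_of_nonneg_right _ dist_nonneg
            exact pow_le_one₀ S.lam_pos.le S.lam_lt_one.le
        _ < S.eps := by simpa using hd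
    have hcontr : dist (S.phi zk) (S.phi xk) ≤ S.lam * dist zk xk :=
      S.contract_s xk zk xk brk hdk (S.br_self xk) (by simpa using S.eps_pos)
    have hlt : dist (S.phi zk) (S.phi xk) < S.eps := by
      calc dist (S.phi zk) (S.phi xk) ≤ S.lam * dist zk xk := hcontr
        _ < S.eps := S.lam_lt_eps_of_lt (by rwa [dist_comm]) dist_nonneg
    have hbr1 : S.phi (S.br zk xk) = S.br (S.phi zk) (S.phi xk) :=
      S.phi_br zk xk (by rwa [dist_comm]) hlt
    have e1 : hIter S.phi ((k:ℤ)+1) x = S.phi xk := hIter_natSucc S.phi k x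
    have e2 : hIter S.phi ((k:ℤ)+1) z = S.phi zk := hIter_natSucc S.phi k z
    constructor
    · show S.br (hIter S.phi ((k:ℕ)+1:ℕ) z) (hIter S.phi ((k:ℕ)+1:ℕ) x) = _
      push_cast
      rw [e1, e2, ← hbr1, brk]
    · show dist (hIter S.phi ((k:ℕ)+1:ℕ) x) (hIter S.phi ((k:ℕ)+1:ℕ) z) ≤ _
      push_cast
      rw [e1, e2, dist_comm]
      calc dist (S.phi zk) (S.phi xk) ≤ S.lam * dist zk xk := hcontr
        _ = S.lam * dist xk zk := by rw [dist_comm]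
        _ ≤ S.lam * (S.lam ^ k * dist x z) :=
            mul_le_mul_of_nonneg_left dk S.lam_pos.le
        _ = S.lam ^ (k+1) * dist x z := by ring

/-- Half-expansivity: an unstable pair whose forward orbits stay uniformly close must coincide. -/
lemma expansive_u (S : SmaleSpace X) {δ : ℝ} (hδ : δ < S.eps) {x z : X}
    (hbr : S.br x z = z)
    (hall : ∀ k : ℕ, dist (hIter S.phi k x) (hIter S.phi k z) ≤ δ) : z = x := by
  have hbrall : ∀ k : ℕ, S.br (hIter S.phi k x) (hIter S.phi k z) = hIter S.phi k z := by
    intro k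
    induction k with
    | zero => simpa [hIter_zero] using hbr
    | succ k ih =>
      have h1 : dist (hIter S.phi k x) (hIter S.phi k z) < S.eps := lt_of_le_of_lt (hall k) hδ
      have h2 : dist (hIter S.phi (k+1:ℕ) x) (hIter S.phi (k+1:ℕ) z) < S.eps :=
        lt_of_le_of_lt (hall (k+1)) hδ
      have e1 := hIter_natSucc S.phi k x
      have e2 := hIter_natSucc S.phi k z
      have h2' : dist (S.phi (hIter S.phi k x)) (S.phi (hIter S.phi k z)) < S.eps := by
        rw [← e1, ← e2]; exact_mod_cast h2
      have := S.phi_br (hIter S.phi k x) (hIter S.phi k z) h1 h2'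
      show S.br (hIter S.phi ((k:ℕ)+1:ℕ) x) (hIter S.phi ((k:ℕ)+1:ℕ) z) = _
      push_cast
      rw [e1, e2, ← this, ih]
  have key : ∀ k : ℕ, dist x z ≤ S.lam ^ k * dist (hIter S.phi k x) (hIter S.phi k z) := by
    intro k
    induction k with
    | zero => simp [hIter_zero]
    | succ k ih =>
      have hb := hbrall (k+1)
      have hd : dist (hIter S.phi (k+1:ℕ) x) (hIter S.phi (k+1:ℕ) z) < S.eps :=
        lt_of_le_of_lt (hall (k+1)) hδ
      have hc := S.contract_u (hIter S.phi (k+1:ℕ) x) (hIter S.phi (k+1:ℕ) z)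
        (hIter S.phi (k+1:ℕ) x) hb hd (S.br_self _) (by simpa using S.eps_pos)
      have e1 : S.phi.symm (hIter S.phi (k+1:ℕ) x) = hIter S.phi k x := by
        push_cast; exact hIter_symm_natSucc S.phi k x
      have e2 : S.phi.symm (hIter S.phi (k+1:ℕ) z) = hIter S.phi k z := by
        push_cast; exact hIter_symm_natSucc S.phi k z
      rw [e1, e2, dist_comm (hIter S.phi (k+1:ℕ) z)] at hc
      rw [dist_comm] at hc
      calc dist x z ≤ S.lam ^ k * dist (hIter S.phi k x) (hIter S.phi k z) := ih
        _ ≤ S.lam ^ k * (S.lam * dist (hIter S.phi (k+1:ℕ) x) (hIter S.phi (k+1:ℕ) z)) :=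
            mul_le_mul_of_nonneg_left hc (pow_nonneg S.lam_pos.le k)
        _ = S.lam ^ (k+1) * dist (hIter S.phi (k+1:ℕ) x) (hIter S.phi (k+1:ℕ) z) := by ring
  have hδ0 : 0 ≤ δ := le_trans dist_nonneg (hall 0)
  have hle : ∀ k : ℕ, dist x z ≤ S.lam ^ k * δ := fun k =>
    le_trans (key k) (mul_le_mul_of_nonneg_left (hall k) (pow_nonneg S.lam_pos.le k))
  have htend : Tendsto (fun k : ℕ => S.lam ^ k * δ) atTop (nhds 0) := by
    have := tendsto_pow_atTop_nhds_zero_of_lt_one S.lam_pos.le S.lam_lt_one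
    simpa using this.mul_const δ
  have : dist x z ≤ 0 := ge_of_tendsto htend (Eventually.of_forall hle)
  have : dist x z = 0 := le_antisymm this dist_nonneg
  exact (dist_eq_zero.mp this).symm


/-- The "time-reversed" Smale space: `φ⁻¹` with the flipped bracket. -/
def symm (S : SmaleSpace X) : SmaleSpace X where
  phi := S.phi.symm
  eps := S.eps
  lam := S.lam
  br x y := S.br y x
  eps_pos := S.eps_pos
  lam_pos := S.lam_pos
  lam_lt_one := S.lam_lt_one
  br_cont := by
    have hswap : Continuous (fun p : X × X => (p.2, p.1)) := by continuity
    have : ContinuousOn ((fun p : X × X => S.br p.1 p.2) ∘ (fun p : X × X => (p.2, p.1)))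
        {p : X × X | dist p.1 p.2 < S.eps} := by
      apply S.br_cont.comp hswap.continuousOn
      intro p hp
      simpa [dist_comm] using hp
    exact this
  br_self := fun x => S.br_self x
  br_assoc_left := by
    intro x y z h1 h2 h3
    exact S.br_assoc_right z y x (by rwa [dist_comm]) (by rwa [dist_comm]) (by rwa [dist_comm])
  br_assoc_right := by
    intro x y z h1 h2 h3
    exact S.br_assoc_left z y x (by rwa [dist_comm]) (by rwa [dist_comm]) (by rwa [dist_comm])
  phi_br := by
    intro x y h1 h2
    have := S.phi_br (S.phi.symm y) (S.phi.symm x) (by simpa [dist_comm] using h2)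
      (by simpa [dist_comm] using h1)
    simp only [Homeomorph.apply_symm_apply] at this
    calc S.phi.symm (S.br y x) = S.phi.symm (S.phi (S.br (S.phi.symm y) (S.phi.symm x))) := by
          rw [this]
      _ = S.br (S.phi.symm y) (S.phi.symm x) := by simp
  contract_s := by
    intro x y z h1 h2 h3 h4
    exact S.contract_u x y z h1 h2 h3 h4
  contract_u := by
    intro x y z h1 h2 h3 h4
    have := S.contract_s x y z h1 h2 h3 h4
    simpa using this

/-- Backward contraction along unstable pairs. -/
lemma backward (S : SmaleSpace X) {x z : X} (hbr : S.br x z = z) (hd : dist x z < S.eps) :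
    ∀ k : ℕ, S.br (hIter S.phi (-(k:ℤ)) x) (hIter S.phi (-(k:ℤ)) z) = hIter S.phi (-(k:ℤ)) z ∧
      dist (hIter S.phi (-(k:ℤ)) x) (hIter S.phi (-(k:ℤ)) z) ≤ S.lam ^ k * dist x z := by
  intro k
  have h0 := S.symm.forward (x := x) (z := z) hbr hd k
  have e : ∀ w : X, hIter S.symm.phi (k:ℤ) w = hIter S.phi (-(k:ℤ)) w := by
    intro w; exact hIter_symm S.phi (k:ℤ) w
  rw [e, e] at h0
  exact ⟨h0.1, h0.2⟩

/-- Shadowing: uniformly forward-close orbits are stably related. -/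
lemma stable_of_close (S : SmaleSpace X) : ∃ δ : ℝ, 0 < δ ∧ ∀ x z : X,
    (∀ k : ℕ, dist (hIter S.phi k x) (hIter S.phi k z) ≤ δ) →
      S.br z x = z ∧ dist x z < S.eps := by
  classical
  set K : Set (X × X) := {p : X × X | dist p.1 p.2 ≤ S.eps / 2} with hK
  have hKc : IsCompact K := by
    have : IsClosed K := isClosed_le (by fun_prop) continuous_const
    exact this.isCompact
  have hsub : K ⊆ {p : X × X | dist p.1 p.2 < S.eps} := by
    intro p hp
    have hp' : dist p.1 p.2 ≤ S.eps/2 := hp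
    have h2 : S.eps/2 < S.eps := by linarith [S.eps_pos]
    exact lt_of_le_of_lt hp' h2
  have hcont : ContinuousOn (fun p : X × X => S.br p.1 p.2) K := S.br_cont.mono hsub
  have huc : UniformContinuousOn (fun p : X × X => S.br p.1 p.2) K :=
    hKc.uniformContinuousOn_of_continuous hcont
  obtain ⟨δ1, δ1pos, hδ1⟩ := (Metric.uniformContinuousOn_iff.mp huc) (S.eps/4)
    (by linarith [S.eps_pos])
  refine ⟨min (δ1/2) (S.eps/4), lt_min (by linarith) (by linarith [S.eps_pos]), ?_⟩
  intro x z hall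
  have hd0 : dist x z ≤ min (δ1/2) (S.eps/4) := by simpa [hIter_zero] using hall 0
  have hdze : dist x z ≤ S.eps / 4 := le_trans hd0 (min_le_right _ _)
  have hdzd : dist x z < δ1 := lt_of_le_of_lt (le_trans hd0 (min_le_left _ _)) (by linarith)
  set w := S.br z x with hw
  have hzxK : (z, x) ∈ K := by
    show dist z x ≤ S.eps / 2
    rw [dist_comm]; linarith [S.eps_pos]
  have hxxK : (x, x) ∈ K := by
    show dist x x ≤ S.eps/2
    simp only [dist_self]; linarith [S.eps_pos]
  have hzzK : (z, z) ∈ K := by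
    show dist z z ≤ S.eps/2
    simp only [dist_self]; linarith [S.eps_pos]
  have hwx : dist w x < S.eps / 4 := by
    have hd : dist ((z, x) : X × X) ((x, x) : X × X) < δ1 := by
      rw [Prod.dist_eq]
      simp only [dist_self]
      rw [max_lt_iff]
      exact ⟨by rwa [dist_comm], δ1pos⟩
    have := hδ1 (z, x) hzxK (x, x) hxxK hd
    simpa [hw, S.br_self] using this
  have hwz : dist w z < S.eps / 4 := by
    have hd : dist ((z, x) : X × X) ((z, z) : X × X) < δ1 := by
      rw [Prod.dist_eq]
      simp only [dist_self]
      rw [max_lt_iff]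
      exact ⟨δ1pos, hdzd⟩
    have := hδ1 (z, x) hzxK (z, z) hzzK hd
    simpa [hw, S.br_self, dist_comm] using this
  have hdzx : dist z x < S.eps := by rw [dist_comm]; linarith [S.eps_pos]
  have hbrwx : S.br w x = w := by
    rw [hw]
    exact S.br_assoc_left z x x hdzx (by rw [← hw]; linarith [S.eps_pos]) hdzx
  have hbrzw : S.br z w = w := by
    rw [hw]
    exact S.br_assoc_right z z x hdzx
      (by rw [← hw]; rw [dist_comm]; linarith [S.eps_pos]) hdzx
  have hxw : dist x w < S.eps := by rw [dist_comm]; linarith [S.eps_pos]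
  have hfwd := S.forward hbrwx hxw
  have hcl : ∀ k : ℕ, dist (hIter S.phi k z) (hIter S.phi k w) ≤ S.eps / 2 := by
    intro k
    have h1 : dist (hIter S.phi k z) (hIter S.phi k x) ≤ S.eps/4 := by
      rw [dist_comm]; exact le_trans (hall k) (min_le_right _ _)
    have h2 : dist (hIter S.phi k x) (hIter S.phi k w) ≤ S.lam ^ k * dist x w := (hfwd k).2
    have h3 : S.lam ^ k * dist x w ≤ dist x w := by
      apply mul_le_of_le_one_left dist_nonneg
      exact pow_le_one₀ S.lam_pos.le S.lam_lt_one.le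
    have h4 : dist x w ≤ S.eps/4 := by rw [dist_comm]; linarith
    calc dist (hIter S.phi k z) (hIter S.phi k w)
        ≤ dist (hIter S.phi k z) (hIter S.phi k x) + dist (hIter S.phi k x) (hIter S.phi k w) :=
          dist_triangle _ _ _
      _ ≤ S.eps/4 + S.eps/4 := by linarith
      _ = S.eps/2 := by ring
  have hwz' : w = z := S.expansive_u (by linarith [S.eps_pos]) hbrzw hcl
  exact ⟨hwz', by linarith [S.eps_pos]⟩

/-- Shadowing: uniformly backward-close orbits are unstably related. -/
lemma unstable_of_close (S : SmaleSpace X) : ∃ δ : ℝ, 0 < δ ∧ ∀ x z : X,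
    (∀ k : ℕ, dist (hIter S.phi (-(k:ℤ)) x) (hIter S.phi (-(k:ℤ)) z) ≤ δ) →
      S.br x z = z ∧ dist x z < S.eps := by
  obtain ⟨δ, δpos, hδ⟩ := S.symm.stable_of_close
  refine ⟨δ, δpos, ?_⟩
  intro x z hall
  have : ∀ k : ℕ, dist (hIter S.symm.phi k x) (hIter S.symm.phi k z) ≤ δ := by
    intro k
    show dist (hIter S.phi.symm (k:ℤ) x) (hIter S.phi.symm (k:ℤ) z) ≤ δ
    rw [hIter_symm S.phi (k:ℤ) x, hIter_symm S.phi (k:ℤ) z]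
    exact hall k
  exact hδ x z this

/-- A flip conjugacy maps each `G_φ^{a,n}` into some `G_ψ^{a,m}`. -/
lemma map_gaN (S : SmaleSpace X) (T : SmaleSpace Y) (h : X ≃ₜ Y)
    (hflip : IsFlipConjugacy S T h) (n : ℕ) :
    ∃ m : ℕ, ∀ p : X × X, p ∈ S.GaN (n:ℤ) → ((h p.1, h p.2) : Y × Y) ∈ T.GaN (m:ℤ) := by
  obtain ⟨δs, δspos, hCs⟩ := T.stable_of_close
  obtain ⟨δu, δupos, hCu⟩ := T.unstable_of_close
  set δT := min δs δu with hδT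
  have δTpos : 0 < δT := lt_min δspos δupos
  have huc := Metric.uniformContinuous_iff.mp
    (CompactSpace.uniformContinuous_of_continuous h.continuous)
  obtain ⟨δX, δXpos, hδX⟩ := huc δT δTpos
  obtain ⟨K, hKlt⟩ := exists_pow_lt_of_lt_one (div_pos δXpos S.eps_pos) S.lam_lt_one
  have hKe : S.lam ^ K * S.eps < δX := (lt_div_iff₀ S.eps_pos).mp hKlt
  set m := n + K with hm
  refine ⟨m, ?_⟩
  rintro ⟨x, z⟩ hp
  obtain ⟨hs, hu⟩ := hp
  have hs1 : S.br (hIter S.phi (n:ℤ) z) (hIter S.phi (n:ℤ) x) = hIter S.phi (n:ℤ) z := hs.1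
  have hs2 : dist (hIter S.phi (n:ℤ) x) (hIter S.phi (n:ℤ) z) < S.eps := hs.2
  have hu1 : S.br (hIter S.phi (-(n:ℤ)) x) (hIter S.phi (-(n:ℤ)) z) = hIter S.phi (-(n:ℤ)) z :=
    hu.1
  have hu2 : dist (hIter S.phi (-(n:ℤ)) x) (hIter S.phi (-(n:ℤ)) z) < S.eps := hu.2
  have FD : ∀ k : ℕ, dist (hIter S.phi ((n:ℤ)+(k:ℤ)) x) (hIter S.phi ((n:ℤ)+(k:ℤ)) z)
      ≤ S.lam ^ k * S.eps := by
    intro k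
    have h1 := (S.forward hs1 hs2 k).2
    rw [← hIter_add, ← hIter_add] at h1
    rw [add_comm (n:ℤ) (k:ℤ)]
    exact le_trans h1 (mul_le_mul_of_nonneg_left hs2.le (pow_nonneg S.lam_pos.le k))
  have BD : ∀ k : ℕ, dist (hIter S.phi (-((n:ℤ)+(k:ℤ))) x) (hIter S.phi (-((n:ℤ)+(k:ℤ))) z)
      ≤ S.lam ^ k * S.eps := by
    intro k
    have h1 := (S.backward hu1 hu2 k).2
    rw [← hIter_add, ← hIter_add] at h1
    have e : (-((n:ℤ)+(k:ℤ))) = (-(k:ℤ)) + (-(n:ℤ)) := by ring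
    rw [e]
    exact le_trans h1 (mul_le_mul_of_nonneg_left hu2.le (pow_nonneg S.lam_pos.le k))
  have CL : ∀ k : ℕ, dist (hIter S.phi ((m:ℤ)+(k:ℤ)) x) (hIter S.phi ((m:ℤ)+(k:ℤ)) z) < δX ∧
      dist (hIter S.phi (-((m:ℤ)+(k:ℤ))) x) (hIter S.phi (-((m:ℤ)+(k:ℤ))) z) < δX := by
    intro k
    have e : ((m:ℤ) + (k:ℤ)) = (n:ℤ) + ((K + k : ℕ) : ℤ) := by push_cast [hm]; ring
    have f1 := FD (K + k)
    have f2 := BD (K + k)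
    rw [← e] at f1 f2
    have hpow : S.lam ^ (K + k) * S.eps ≤ S.lam ^ K * S.eps := by
      apply mul_le_mul_of_nonneg_right _ S.eps_pos.le
      exact pow_le_pow_of_le_one S.lam_pos.le S.lam_lt_one.le (Nat.le_add_right K k)
    exact ⟨lt_of_le_of_lt (f1.trans hpow) hKe, lt_of_le_of_lt (f2.trans hpow) hKe⟩
  cases hflip with
  | inl hc =>
    have hh := conj_hIter S.phi hc
    constructor
    · -- GsN m
      refine hCs (hIter T.phi (m:ℤ) (h x)) (hIter T.phi (m:ℤ) (h z)) ?_
      intro k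
      rw [← hIter_add, ← hIter_add, add_comm (k:ℤ) (m:ℤ), ← hh, ← hh]
      exact le_trans (hδX (CL k).1).le (min_le_left _ _)
    · -- GuN m
      refine hCu (hIter T.phi (-(m:ℤ)) (h x)) (hIter T.phi (-(m:ℤ)) (h z)) ?_
      intro k
      have e : (-(k:ℤ)) + (-(m:ℤ)) = -((m:ℤ)+(k:ℤ)) := by ring
      rw [← hIter_add, ← hIter_add, e, ← hh, ← hh]
      exact le_trans (hδX (CL k).2).le (min_le_right _ _)
  | inr hc =>
    have hh0 := conj_hIter S.phi (ψ := T.phi.symm) hc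
    have hh : ∀ (j : ℤ) (w : X), h (hIter S.phi j w) = hIter T.phi (-j) (h w) := by
      intro j w
      rw [hh0 j w, hIter_symm]
    constructor
    · -- GsN m, from backward decay
      refine hCs (hIter T.phi (m:ℤ) (h x)) (hIter T.phi (m:ℤ) (h z)) ?_
      intro k
      have e : (k:ℤ) + (m:ℤ) = -(-((m:ℤ)+(k:ℤ))) := by ring
      rw [← hIter_add, ← hIter_add, e, ← hh, ← hh]
      exact le_trans (hδX (CL k).2).le (min_le_left _ _)
    · -- GuN m, from forward decay
      refine hCu (hIter T.phi (-(m:ℤ)) (h x)) (hIter T.phi (-(m:ℤ)) (h z)) ?_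
      intro k
      have e : (-(k:ℤ)) + (-(m:ℤ)) = -((m:ℤ)+(k:ℤ)) := by ring
      have e2 : (-(k:ℤ)) + (-(m:ℤ)) = -(((m:ℤ)+(k:ℤ))) := e
      rw [← hIter_add, ← hIter_add, e2]
      have e3 : -((m:ℤ)+(k:ℤ)) = -(((m:ℤ)+(k:ℤ))) := rfl
      rw [show (-(((m:ℤ)+(k:ℤ)))) = -(((m:ℤ)+(k:ℤ))) from rfl]
      rw [show ∀ w : Y, hIter T.phi (-(((m:ℤ)+(k:ℤ)))) w = hIter T.phi (-(((m:ℤ)+(k:ℤ)))) w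
        from fun _ => rfl]
      have hx' := hh ((m:ℤ)+(k:ℤ)) x
      have hz' := hh ((m:ℤ)+(k:ℤ)) z
      rw [← hx', ← hz']
      exact le_trans (hδX (CL k).1).le (min_le_right _ _)

lemma IsFlipConjugacy.symm {S : SmaleSpace X} {T : SmaleSpace Y} {h : X ≃ₜ Y}
    (hflip : IsFlipConjugacy S T h) : IsFlipConjugacy T S h.symm := by
  cases hflip with
  | inl hc =>
    left
    intro y
    have := hc (h.symm y)
    simp only [Homeomorph.apply_symm_apply] at this
    calc h.symm (T.phi y) = h.symm (h (S.phi (h.symm y))) := by rw [this]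
      _ = S.phi (h.symm y) := by simp
  | inr hc =>
    right
    intro y
    have := hc (S.phi.symm (h.symm y))
    simp only [Homeomorph.apply_symm_apply] at this
    have h3 : T.phi y = h (S.phi.symm (h.symm y)) := by
      conv_lhs => rw [this]
      simp
    calc h.symm (T.phi y) = h.symm (h (S.phi.symm (h.symm y))) := by rw [h3]
      _ = S.phi.symm (h.symm y) := by simp

lemma map_ga (S : SmaleSpace X) (T : SmaleSpace Y) (h : X ≃ₜ Y)
    (hflip : IsFlipConjugacy S T h) {p : X × X} (hp : p ∈ S.Ga) :
    ((h p.1, h p.2) : Y × Y) ∈ T.Ga := by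
  obtain ⟨n, hn⟩ := mem_iUnion.mp hp
  obtain ⟨m, hm⟩ := map_gaN S T h hflip n
  exact mem_iUnion.mpr ⟨m, hm p hn⟩

lemma continuous_ga_map (S : SmaleSpace X) (T : SmaleSpace Y) (f : X → Y) (hf : Continuous f)
    (hmap : ∀ n : ℕ, ∃ m : ℕ, ∀ p : X × X, p ∈ S.GaN (n:ℤ) →
      ((f p.1, f p.2) : Y × Y) ∈ T.GaN (m:ℤ))
    (F : ↥S.Ga → ↥T.Ga) (hF : ∀ p, (F p : Y × Y) = (f (p : X × X).1, f (p : X × X).2)) :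
    @Continuous _ _ S.gaTopology T.gaTopology F := by
  apply continuous_iSup_dom.mpr
  intro n
  rw [continuous_coinduced_dom]
  obtain ⟨m, hm⟩ := hmap n
  set g : ↥(S.GaN (n:ℤ)) → ↥(T.GaN (m:ℤ)) :=
    fun q => ⟨(f (q : X × X).1, f (q : X × X).2), hm q q.2⟩ with hg
  have hgc : Continuous g := by
    apply Continuous.subtype_mk
    exact (hf.comp (continuous_fst.comp continuous_subtype_val)).prodMk
      (hf.comp (continuous_snd.comp continuous_subtype_val))
  have hincl : @Continuous ↥(T.GaN (m:ℤ)) ↥T.Ga _ T.gaTopology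
      (Set.inclusion (T.gaN_subset_ga m)) := by
    rw [continuous_iff_coinduced_le]
    exact le_iSup
      (fun k : ℕ => TopologicalSpace.coinduced (Set.inclusion (T.gaN_subset_ga k)) inferInstance) m
  have heq : F ∘ Set.inclusion (S.gaN_subset_ga n) =
      (Set.inclusion (T.gaN_subset_ga m)) ∘ g := by
    funext q
    apply Subtype.ext
    show ((F (Set.inclusion (S.gaN_subset_ga n) q)) : Y × Y) = ((g q : Y × Y))
    rw [hF]
  rw [heq]
  exact @Continuous.comp ↥(S.GaN (n:ℤ)) ↥(T.GaN (m:ℤ)) ↥T.Ga _ _ T.gaTopology _ _ hincl hgc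

end SmaleSpace

/-- A flip conjugacy `h : X → Y` induces, via `η(x,z) = (h(x),h(z))`,
an isomorphism of topological groupoids from `G_φ^a` onto `G_ψ^a` (a structure preserving
bijection which is a homeomorphism for the inductive limit topologies). -/
theorem flipConjugacy_induces_gaIso {X Y : Type*} [MetricSpace X] [CompactSpace X]
    [MetricSpace Y] [CompactSpace Y] (S : SmaleSpace X) (T : SmaleSpace Y)
    (h : X ≃ₜ Y) (hflip : SmaleSpace.IsFlipConjugacy S T h) :
    ∃ E : SmaleSpace.GaIso S T, ∀ p : ↥S.Ga,
      (E.toEquiv p : Y × Y) = (h (p : X × X).1, h (p : X × X).2) := by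
  have hflip' := SmaleSpace.IsFlipConjugacy.symm hflip
  let eqv : ↥S.Ga ≃ ↥T.Ga :=
    { toFun := fun p => ⟨(h (p : X × X).1, h (p : X × X).2),
        SmaleSpace.map_ga S T h hflip p.2⟩
      invFun := fun q => ⟨(h.symm (q : Y × Y).1, h.symm (q : Y × Y).2),
        SmaleSpace.map_ga T S h.symm hflip' q.2⟩
      left_inv := by
        intro p
        apply Subtype.ext
        simp
      right_inv := by
        intro q
        apply Subtype.ext
        simp }
  refine ⟨{ toEquiv := eqv
            cont := ?_
            cont_symm := ?_
            map_mul := ?_ }, fun p => rfl⟩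
  · exact SmaleSpace.continuous_ga_map S T h h.continuous
      (SmaleSpace.map_gaN S T h hflip) eqv (fun p => rfl)
  · exact SmaleSpace.continuous_ga_map T S h.symm h.symm.continuous
      (SmaleSpace.map_gaN T S h.symm hflip') eqv.symm (fun p => rfl)
  · intro p q r h1 h2
    constructor
    · show h (p : X × X).2 = h (q : X × X).1
      exact congrArg h h1
    · show (h (r : X × X).1, h (r : X × X).2) = (h (p : X × X).1, h (q : X × X).2)
      rw [h2]
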